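/- Let F be an invertible n×n complex matrix with F·F̄ = ε·1, where ε ∈ {1, −1}, F̄ denotes the entrywise complex conjugate of F, and F* = F̄ᵗ. Then the positive definite matrices F*F and (F*F)⁻¹ have the same characteristic polynomial; in particular, the eigenvalue list of F*F (with multiplicities) is invariant under the map λ ↦ 1/λ. -/

import Mathlib

open Matrix Polynomial

section aux

variable {n : ℕ}

lemma charpoly_transpose_aux (M : Matrix (Fin n) (Fin n) ℂ) : Mᵀ.charpoly = M.charpoly := by
  have : charmatrix Mᵀ = (charmatrix M)ᵀ := by
    ext i j
    rcases eq_or_ne i j with rfl | hij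
    · simp [charmatrix_apply_eq]
    · simp [charmatrix_apply_ne _ _ _ hij, charmatrix_apply_ne _ _ _ (Ne.symm hij)]
  rw [Matrix.charpoly, Matrix.charpoly, this, det_transpose]

lemma charpoly_conj_aux (P M : Matrix (Fin n) (Fin n) ℂ) (hP : IsUnit P.det) :
    (P * M * P⁻¹).charpoly = M.charpoly := by
  have h1 : (P.map C) * (P⁻¹.map C) = 1 := by
    rw [← Matrix.map_mul, Matrix.mul_nonsing_inv _ hP]
    exact Matrix.map_one _ (map_zero C) (map_one C)
  have key : charmatrix (P * M * P⁻¹) = P.map C * charmatrix M * P⁻¹.map C := by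
    unfold charmatrix
    rw [Matrix.mul_sub, Matrix.sub_mul]
    congr 1
    · symm
      rw [Matrix.mul_assoc, scalar_commute (X : ℂ[X]) (Commute.all X) (P⁻¹.map C),
        ← Matrix.mul_assoc, h1, Matrix.one_mul]
    · simp only [RingHom.mapMatrix_apply, Matrix.map_mul]
  have hdet : (P.map C).det * (P⁻¹.map C).det = 1 := by
    rw [← det_mul, h1, det_one]
  rw [Matrix.charpoly, Matrix.charpoly, key, det_mul, det_mul]
  linear_combination M.charmatrix.det * hdet

lemma charpoly_diagonal_aux (d : Fin n → ℂ) :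
    (diagonal d).charpoly = ∏ i, (X - C (d i)) := by
  have : charmatrix (diagonal d) = diagonal (fun i => X - C (d i)) := by
    ext i j
    rcases eq_or_ne i j with rfl | hij
    · simp [charmatrix_apply_eq]
    · simp [charmatrix_apply_ne _ _ _ hij, diagonal_apply_ne _ hij]
  rw [Matrix.charpoly, this, det_diagonal]

lemma roots_charpoly_diagonal_aux (d : Fin n → ℂ) :
    (diagonal d).charpoly.roots = (Finset.univ.val.map d) := by
  rw [charpoly_diagonal_aux]
  have : ∏ i, (X - C (d i)) = ((Finset.univ.val.map d).map fun a => X - C a).prod := by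
    rw [Multiset.map_map]; rfl
  rw [this, roots_multiset_prod_X_sub_C]

end aux

/-- If `F` is an invertible `n × n` complex matrix with `F ⬝ F̄ = ε • 1`, `ε = ±1`,
then `F*F` and `(F*F)⁻¹` have the same characteristic polynomial; in particular the
eigenvalue list (multiset of roots of the characteristic polynomial) of `F*F` is
invariant under `λ ↦ λ⁻¹`. -/
theorem stmt_3 {n : ℕ} (F : Matrix (Fin n) (Fin n) ℂ) (hF : IsUnit F)
    (ε : ℂ) (hε : ε = 1 ∨ ε = -1)
    (h : F * F.map (starRingEnd ℂ) = ε • (1 : Matrix (Fin n) (Fin n) ℂ)) :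
    (Fᴴ * F).charpoly = ((Fᴴ * F)⁻¹).charpoly ∧
      ((Fᴴ * F).charpoly.roots).map (fun l => l⁻¹) = (Fᴴ * F).charpoly.roots := by
  have hdF : IsUnit F.det := (isUnit_iff_isUnit_det F).mp hF
  have hdFt : IsUnit Fᵀ.det := by rwa [det_transpose]
  have hFiF : F⁻¹ * F = 1 := nonsing_inv_mul F hdF
  have hFFi : F * F⁻¹ = 1 := mul_nonsing_inv F hdF
  have hFtiFt : (Fᵀ)⁻¹ * Fᵀ = 1 := nonsing_inv_mul Fᵀ hdFt
  have hε2 : ε * ε = 1 := by rcases hε with rfl | rfl <;> ring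
  have hmap : F.map (starRingEnd ℂ) = ε • F⁻¹ := by
    have := congrArg (fun M => F⁻¹ * M) h
    simpa [← Matrix.mul_assoc, hFiF, Matrix.mul_smul, Matrix.mul_one] using this
  have hFH : Fᴴ = ε • (Fᵀ)⁻¹ := by
    have : Fᴴ = (F.map (starRingEnd ℂ))ᵀ := rfl
    rw [this, hmap, transpose_smul, transpose_nonsing_inv]
  set A := Fᴴ * F with hA
  have hAT : Aᵀ = ε • (Fᵀ * F⁻¹) := by
    rw [hA, transpose_mul, hFH, transpose_smul, transpose_nonsing_inv, transpose_transpose,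
      Matrix.mul_smul]
  have hright : A * (F⁻¹ * Aᵀ * F) = 1 := by
    rw [hAT, hA, hFH]
    simp only [Matrix.smul_mul, Matrix.mul_smul, smul_smul]
    rw [hε2, one_smul]
    calc (Fᵀ)⁻¹ * F * (F⁻¹ * (Fᵀ * F⁻¹) * F)
        = (Fᵀ)⁻¹ * (F * F⁻¹) * Fᵀ * (F⁻¹ * F) := by
          simp only [Matrix.mul_assoc]
      _ = 1 := by rw [hFFi, hFiF, Matrix.mul_one, Matrix.mul_one, hFtiFt]
  have hAinv : A⁻¹ = F⁻¹ * Aᵀ * F := inv_eq_right_inv hright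
  have hdFinv : IsUnit (F⁻¹).det := by
    rw [det_nonsing_inv]
    exact isUnit_ringInverse.mpr hdF
  -- part 1
  have hcp : A.charpoly = (A⁻¹).charpoly := by
    have e : F⁻¹ * Aᵀ * F = F⁻¹ * Aᵀ * (F⁻¹)⁻¹ := by rw [nonsing_inv_nonsing_inv F hdF]
    rw [hAinv, e, charpoly_conj_aux _ _ hdFinv, charpoly_transpose_aux]
  refine ⟨hcp, ?_⟩
  -- part 2 : spectral theorem
  have hAH : A.IsHermitian := isHermitian_conjTranspose_mul_self F
  set d : Fin n → ℂ := fun i => ((hAH.eigenvalues i : ℝ) : ℂ) with hd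
  set U : Matrix (Fin n) (Fin n) ℂ := (hAH.eigenvectorUnitary : Matrix (Fin n) (Fin n) ℂ) with hU
  have hU1 : U * star U = 1 := (Matrix.mem_unitaryGroup_iff).mp hAH.eigenvectorUnitary.2
  have hU2 : star U * U = 1 := (Matrix.mem_unitaryGroup_iff').mp hAH.eigenvectorUnitary.2
  have hUinv : U⁻¹ = star U := inv_eq_right_inv hU1
  have hdetU : IsUnit U.det := by
    apply IsUnit.of_mul_eq_one (star U).det
    rw [← det_mul, hU1, det_one]
  have h3 : A = U * diagonal d * U⁻¹ := by
    rw [hUinv]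
    exact hAH.spectral_theorem
  have hdetA : IsUnit A.det := by
    rw [hA, det_mul, det_conjTranspose]
    exact hdF.star.mul hdF
  have hdne : ∀ i, d i ≠ 0 := by
    intro i hi
    have hdetprod : A.det = ∏ j, d j := hAH.det_eq_prod_eigenvalues
    rw [hdetprod] at hdetA
    exact hdetA.ne_zero (Finset.prod_eq_zero (Finset.mem_univ i) hi)
  have hDinv : diagonal d * diagonal (fun i => (d i)⁻¹) = 1 := by
    ext i j
    rcases eq_or_ne i j with rfl | hij
    · simp [mul_inv_cancel₀ (hdne i), one_apply]
    · simp [diagonal_apply_ne _ hij, one_apply_ne hij]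
  have hAinv2 : A⁻¹ = U * diagonal (fun i => (d i)⁻¹) * U⁻¹ := by
    apply inv_eq_right_inv
    rw [h3, hUinv]
    calc U * diagonal d * star U * (U * diagonal (fun i => (d i)⁻¹) * star U)
        = U * (diagonal d * ((star U * U) * diagonal (fun i => (d i)⁻¹))) * star U := by
          simp only [Matrix.mul_assoc]
      _ = 1 := by rw [hU2, Matrix.one_mul, hDinv, Matrix.mul_one, hU1]
  have hroots : A.charpoly.roots = Finset.univ.val.map d := by
    rw [h3, charpoly_conj_aux _ _ hdetU, roots_charpoly_diagonal_aux]
  have hroots' : (A⁻¹).charpoly.roots = (Finset.univ.val.map d).map (fun l => l⁻¹) := by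
    rw [hAinv2, charpoly_conj_aux _ _ hdetU, roots_charpoly_diagonal_aux, Multiset.map_map]
    rfl
  rw [hroots, ← hroots', ← hcp, hroots]
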